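/- For n ≥ 3, every degree sequence in D_b(n) (potentially biconnected, i.e., having a 2-connected realization) satisfies d_n ≥ 2 and Σ_{i=1}^{n} d_i ≥ 2n - 4 + 2d_1, where d_1 is the largest and d_n the smallest part. -/

import Mathlib

/-- A function `d : Fin n → ℕ` is graphic if it is the degree sequence of a
simple undirected graph on `n` vertices. -/
def Graphic (n : ℕ) (d : Fin n → ℕ) : Prop :=
  ∃ G : SimpleGraph (Fin n), ∀ v, (G.neighborSet v).ncard = d v

/-- Zero-free degree sequences of length `n` (non-increasing, positive, graphic). -/
def D (n : ℕ) : Set (Fin n → ℕ) :=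
  {d | Antitone d ∧ (∀ i, 0 < d i) ∧ Graphic n d}

/-- Degree sequences of length `n` allowing zero terms. -/
def D0 (n : ℕ) : Set (Fin n → ℕ) :=
  {d | Antitone d ∧ Graphic n d}
/-- A graph on n vertices is biconnected (2-connected): at least 3 vertices and
deleting any single vertex leaves a connected graph. -/
def Biconnected {n : ℕ} (G : SimpleGraph (Fin n)) : Prop :=
  3 ≤ n ∧ ∀ v : Fin n, (G.induce ({v}ᶜ : Set (Fin n))).Connected

/-- A degree sequence is potentially biconnected if it has a biconnected realization. -/
def PotentiallyBiconnected (n : ℕ) (d : Fin n → ℕ) : Prop :=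
  ∃ G : SimpleGraph (Fin n), (∀ v, (G.neighborSet v).ncard = d v) ∧ Biconnected G


section WKAux
open SimpleGraph

lemma step_toward {V : Type*} (G : SimpleGraph V) (hc : G.Connected) {v r : V} (h : v ≠ r) :
    ∃ u, G.Adj v u ∧ G.dist u r < G.dist v r := by
  have hpos : 0 < G.dist v r := hc.pos_dist_of_ne h
  obtain ⟨p, hp⟩ := hc.exists_walk_length_eq_dist v r
  cases p with
  | nil => exact absurd rfl h
  | cons hadj q =>
    refine ⟨_, hadj, ?_⟩
    have := G.dist_le q
    simp [Walk.length_cons] at hp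
    omega

lemma conn_card_le {V : Type*} [Fintype V] (G : SimpleGraph V) [Fintype G.edgeSet]
    (hc : G.Connected) : Fintype.card V ≤ G.edgeFinset.card + 1 := by
  classical
  obtain ⟨r⟩ := hc.nonempty
  have key : ∀ v : {v : V // v ≠ r}, ∃ u, G.Adj v.1 u ∧ G.dist u r < G.dist v.1 r :=
    fun v => step_toward G hc v.2
  choose g hg1 hg2 using key
  have hmem : ∀ v : {v : V // v ≠ r}, s(v.1, g v) ∈ G.edgeFinset := by
    intro v; rw [mem_edgeFinset]; exact (hg1 v)
  have hinj : Function.Injective (fun v : {v : V // v ≠ r} => (⟨s(v.1, g v), hmem v⟩ : G.edgeFinset)) := by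
    intro v w hvw
    simp only [Subtype.mk_eq_mk, Sym2.eq, Sym2.rel_iff', Prod.mk.injEq, Prod.swap_prod_mk] at hvw
    rcases hvw with ⟨h1, h2⟩ | ⟨h1, h2⟩
    · exact Subtype.ext h1
    · exfalso
      have A := hg2 v
      have B := hg2 w
      rw [h1, h2] at A
      omega
  have := Fintype.card_le_of_injective _ hinj
  have hcard : Fintype.card {v : V // v ≠ r} = Fintype.card V - 1 := by
    simp [Fintype.card_subtype_compl, Fintype.card_subtype_eq]
  have hpos : 0 < Fintype.card V := Fintype.card_pos_iff.mpr ⟨r⟩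
  rw [hcard, Fintype.card_coe] at this
  omega


lemma no_deg_one {n : ℕ} (hn : 3 ≤ n) (G : SimpleGraph (Fin n))
    (hbc : ∀ v : Fin n, (G.induce ({v}ᶜ : Set (Fin n))).Connected)
    {v u : Fin n} (hvu : G.neighborSet v = {u}) : False := by
  have hadj : G.Adj v u := by
    have : u ∈ G.neighborSet v := by rw [hvu]; rfl
    exact this
  have hne : v ≠ u := hadj.ne
  -- find w distinct from v and u
  obtain ⟨w, hw⟩ : ∃ w : Fin n, w ∉ ({v, u} : Finset (Fin n)) := by
    by_contra hc
    push_neg at hc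
    have : (Finset.univ : Finset (Fin n)).card ≤ ({v, u} : Finset (Fin n)).card :=
      Finset.card_le_card (fun x _ => hc x)
    have h2 : ({v, u} : Finset (Fin n)).card ≤ 2 := by
      apply le_trans (Finset.card_insert_le _ _); simp
    simp [Finset.card_univ] at this
    omega
  simp only [Finset.mem_insert, Finset.mem_singleton, not_or] at hw
  have hvS : v ∈ ({u}ᶜ : Set (Fin n)) := by simp [hne]
  have hwS : w ∈ ({u}ᶜ : Set (Fin n)) := by simp [hw.2]
  obtain ⟨p⟩ := (hbc u).preconnected ⟨v, hvS⟩ ⟨w, hwS⟩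
  cases p with
  | nil => exact hw.1 rfl
  | cons hadj' q =>
    rename_i x
    have hx : G.Adj v x.1 := hadj'
    have : x.1 ∈ G.neighborSet v := hx
    rw [hvu] at this
    exact x.2 this


lemma wk_count (n : ℕ) (hn : 3 ≤ n) (d : Fin n → ℕ) (G : SimpleGraph (Fin n))
    (hdeg : ∀ v, (G.neighborSet v).ncard = d v)
    (hbc : ∀ v : Fin n, (G.induce ({v}ᶜ : Set (Fin n))).Connected) :
    2 * n - 4 + 2 * d ⟨0, lt_of_lt_of_le (by norm_num) hn⟩ ≤ ∑ i, d i := by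
  classical
  set v0 : Fin n := ⟨0, by omega⟩ with hv0
  set s : Set (Fin n) := {v0}ᶜ with hs
  set G' := G.induce s with hG'
  haveI : Fintype ↥s := Fintype.ofFinite _
  haveI : DecidableRel G'.Adj := Classical.decRel _
  haveI : DecidableRel G.Adj := Classical.decRel _
  have hconn' : G'.Connected := hbc v0
  -- degrees in terms of ncard
  have hdG : ∀ x, G.degree x = d x := by
    intro x
    rw [← hdeg x, degree, neighborFinset_def, Set.ncard_eq_toFinset_card']
  -- card of s
  have hcards : Fintype.card ↥s = n - 1 := by
    have : Fintype.card ↥s = Fintype.card {x : Fin n // x ≠ v0} :=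
      Fintype.card_congr (Equiv.subtypeEquivRight (by simp [hs]))
    rw [this]
    simp [Fintype.card_subtype_compl, Fintype.card_subtype_eq]
  -- edge bound
  have hedges : n - 2 ≤ G'.edgeFinset.card := by
    have := conn_card_le G' hconn'
    rw [hcards] at this
    omega
  -- degree relation
  have hdegrel : ∀ u : ↥s, d u.1 = G'.degree u + (if G.Adj u.1 v0 then 1 else 0) := by
    intro u
    rw [← hdG u.1]
    have hsplit : G.neighborFinset u.1 =
        ((G.neighborFinset u.1).filter (· ≠ v0)) ∪ ((G.neighborFinset u.1).filter (· = v0)) := by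
      rw [← Finset.filter_or]
      simp [em']
    rw [degree, hsplit, Finset.card_union_of_disjoint]
    · congr 1
      · -- card of filter (≠ v0) = G'.degree u
        rw [degree]
        symm
        apply Finset.card_bij (fun (x : ↥s) _ => x.1)
        · intro x hx
          simp only [mem_neighborFinset] at hx ⊢
          simp only [Finset.mem_filter, mem_neighborFinset]
          exact ⟨hx, x.2⟩
        · intro a ha b hb hab
          exact Subtype.ext hab
        · intro w hw
          simp only [Finset.mem_filter, mem_neighborFinset] at hw
          refine ⟨⟨w, by simpa [hs] using hw.2⟩, ?_, rfl⟩
          simp only [mem_neighborFinset]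
          exact hw.1
      · -- card of filter (= v0)
        by_cases h : G.Adj u.1 v0
        · simp only [h, if_true]
          rw [Finset.card_eq_one]
          refine ⟨v0, ?_⟩
          ext x
          simp only [Finset.mem_filter, mem_neighborFinset, Finset.mem_singleton]
          constructor
          · rintro ⟨_, h2⟩; exact h2
          · rintro rfl; exact ⟨h, rfl⟩
        · simp only [h, if_false]
          rw [Finset.card_eq_zero]
          ext x
          simp only [Finset.mem_filter, mem_neighborFinset, Finset.notMem_empty, iff_false,
            not_and]
          intro hx hxv
          rw [hxv] at hx
          exact h hx
    · exact Finset.disjoint_filter.2 fun x _ h1 h2 => h1 h2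
  -- sums over subtype
  have hsub : ∀ f : Fin n → ℕ, ∑ x ∈ Finset.univ.erase v0, f x = ∑ u : ↥s, f u.1 := by
    intro f
    apply Finset.sum_subtype
    intro x; simp [hs]
  have hsum1 : ∑ i, d i = d v0 + ∑ x ∈ Finset.univ.erase v0, d x :=
    (Finset.add_sum_erase _ d (Finset.mem_univ v0)).symm
  have hhand : ∑ u : ↥s, G'.degree u = 2 * G'.edgeFinset.card :=
    G'.sum_degrees_eq_twice_card_edges
  have hind : ∑ u : ↥s, (if G.Adj u.1 v0 then 1 else 0) = d v0 := by
    rw [← hsub (fun x => if G.Adj x v0 then 1 else 0)]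
    rw [Finset.sum_boole]
    rw [← hdG v0, degree]
    norm_cast
    congr 1
    ext x
    simp only [Finset.mem_filter, Finset.mem_erase, Finset.mem_univ, true_and, and_true,
      mem_neighborFinset]
    constructor
    · rintro ⟨_, h2⟩; exact h2.symm
    · intro hx; exact ⟨hx.ne', hx.symm⟩
  have hsum2 : ∑ u : ↥s, d u.1 = 2 * G'.edgeFinset.card + d v0 := by
    calc ∑ u : ↥s, d u.1
        = ∑ u : ↥s, (G'.degree u + (if G.Adj u.1 v0 then 1 else 0)) :=
          Finset.sum_congr rfl (fun u _ => hdegrel u)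
      _ = 2 * G'.edgeFinset.card + d v0 := by rw [Finset.sum_add_distrib, hhand, hind]
  rw [hsum1, hsub d, hsum2]
  omega

end WKAux

theorem potentially_biconnected_necessary (n : ℕ) (hn : 3 ≤ n) (d : Fin n → ℕ)
    (hd : d ∈ D n) (h : PotentiallyBiconnected n d) :
    (∀ i, 2 ≤ d i) ∧ 2 * n - 4 + 2 * d ⟨0, by omega⟩ ≤ ∑ i, d i := by
  obtain ⟨G, hdeg, hn3, hbc⟩ := h
  constructor
  · intro i
    have h1 : 0 < d i := hd.2.1 i
    by_contra hlt
    push_neg at hlt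
    have hnc : (G.neighborSet i).ncard = 1 := by rw [hdeg i]; omega
    obtain ⟨u, hu⟩ := Set.ncard_eq_one.mp hnc
    exact (no_deg_one hn G hbc hu).elim
  · exact wk_count n hn d G hdeg hbc
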